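/- Let a11, a12, a21, a22 be complex numbers and define p_X := (1/4)(|a12 + a21|^2 + |a11 - a22|^2) and p_Y := (1/4)((5·a12 - 3·a21)·conj(a12) + (-3·a12 + 5·a21)·conj(a21) + |a11 - a22|^2). Then p_Y = (p_X + p_Y)/2 + |a12 - a21|^2/2; in particular p_Y ≥ (p_X + p_Y)/2, i.e. the Y-error weight is at least half the bit-error weight. -/

import Mathlib

/-- In one-photon SARG04, the Y-error weight satisfies
`p_Y = (p_X + p_Y)/2 + |a12 - a21|²/2`, hence is at least half the bit-error weight. -/
theorem sarg04_one_photon_pY_ge_half_bit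
    (a11 a12 a21 a22 : ℂ)
    (pX : ℝ) (hpX : pX = (1 / 4) * (‖a12 + a21‖ ^ 2 + ‖a11 - a22‖ ^ 2))
    (pY : ℂ) (hpY : pY = (1 / 4) * ((5 * a12 - 3 * a21) * (starRingEnd ℂ a12)
      + (-3 * a12 + 5 * a21) * (starRingEnd ℂ a21) + (‖a11 - a22‖ ^ 2 : ℂ))) :
    pY = ((pX : ℂ) + pY) / 2 + (‖a12 - a21‖ ^ 2 : ℂ) / 2 ∧
      (pX + pY.re) / 2 ≤ pY.re := by
  have habs : ∀ z : ℂ, ((‖z‖ : ℂ)) ^ 2 = z * (starRingEnd ℂ z) := by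
    intro z
    rw [← Complex.ofReal_pow, Complex.sq_norm]
    exact (Complex.mul_conj z).symm
  have heq : pY = ((pX : ℂ) + pY) / 2 + (‖a12 - a21‖ ^ 2 : ℂ) / 2 := by
    subst hpX hpY
    push_cast
    rw [habs, habs, habs]
    simp only [map_add, map_sub]
    ring
  refine ⟨heq, ?_⟩
  have hre := congrArg Complex.re heq
  simp [Complex.add_re, Complex.div_re, ← Complex.ofReal_pow] at hre
  nlinarith [sq_nonneg ‖a12 - a21‖, hre]
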